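/- arXiv:1208.6533 — 2 statements merged into one kernel-verified Lean document; each statement's English description precedes it below -/
import Mathlib

section
/- Let λ₁, …, λ_N be integers, let q be a positive integer, and let I ⊆ [0,1] be a closed interval with |I| ≥ N²/q. Then the number of integers a with a/q ∈ I and |Σ_{n=1}^N e(λ_n a/q)| ≥ (|I|/100)^N is at least q|I|/(100N)². -/
open scoped Real Topology BigOperators Classical
open MeasureTheory Asymptotics Filter

noncomputable def e2pi (t : ℝ) : ℂ := Complex.exp (2 * Real.pi * Complex.I * t)

/-- `F(x) = ∑_{n≥1} e(P(n)x)/n^α`. -/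
noncomputable def Ffun (P : Polynomial ℤ) (α : ℝ) (x : ℝ) : ℂ :=
  ∑' n : ℕ+, e2pi (((P.eval (n : ℤ) : ℤ) : ℝ) * x) / (((n : ℝ) ^ α : ℝ) : ℂ)

/-- The Hölder exponent of `f` at `x`. -/
noncomputable def holderExponent (f : ℝ → ℂ) (x : ℝ) : ℝ :=
  sSup {γ : ℝ | ∃ Q : Polynomial ℂ, (Q.natDegree : ℝ) ≤ γ ∧
    (fun h : ℝ => f (x + h) - Q.eval (h : ℂ)) =O[𝓝[≠] (0 : ℝ)] fun h : ℝ => |h| ^ γ}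

/-- Maximal multiplicity of a complex zero of `P'`. -/
noncomputable def nuF (P : Polynomial ℤ) : ℕ :=
  ⨆ z : ℂ, Polynomial.rootMultiplicity z (P.derivative.map (Int.castRingHom ℂ))

noncomputable def nu0 (P : Polynomial ℤ) : ℕ := max (nuF P) 2

/-- `sup_{H ≤ |h| < 2H} ‖f(x+h) - f(x)‖²`. -/
noncomputable def supOsc (f : ℝ → ℂ) (x H : ℝ) : ℝ :=
  sSup {y : ℝ | ∃ h : ℝ, H ≤ |h| ∧ |h| < 2 * H ∧ y = ‖f (x + h) - f x‖ ^ 2}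

lemma e2pi_add (x y : ℝ) : e2pi (x + y) = e2pi x * e2pi y := by
  unfold e2pi
  rw [← Complex.exp_add]
  congr 1
  push_cast
  ring

lemma e2pi_norm (x : ℝ) : ‖e2pi x‖ = 1 := by
  unfold e2pi
  rw [Complex.norm_exp]
  have : (2 * (Real.pi:ℂ) * Complex.I * (x:ℝ)).re = 0 := by
    simp [Complex.mul_re, Complex.mul_im]
  rw [this, Real.exp_zero]

lemma e2pi_int (n : ℤ) : e2pi (n : ℝ) = 1 := by
  unfold e2pi
  rw [show 2 * (Real.pi:ℂ) * Complex.I * ((n:ℝ):ℂ) = (n:ℤ) * (2 * Real.pi * Complex.I) by push_cast; ring]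
  exact Complex.exp_int_mul_two_pi_mul_I n

lemma e2pi_eq_cos_sin (x : ℝ) : e2pi x = Real.cos (2*Real.pi*x) + Real.sin (2*Real.pi*x) * Complex.I := by
  unfold e2pi
  rw [show 2 * (Real.pi:ℂ) * Complex.I * (x:ℝ) = ((2*Real.pi*x : ℝ):ℂ) * Complex.I by push_cast; ring]
  rw [Complex.exp_mul_I, Complex.ofReal_cos, Complex.ofReal_sin]

lemma one_sub_e2pi_re (x : ℝ) : (1 - e2pi x).re = 1 - Real.cos (2*Real.pi*x) := by
  rw [e2pi_eq_cos_sin]; simp [← Complex.ofReal_cos, ← Complex.ofReal_sin]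

lemma one_sub_e2pi_im (x : ℝ) : (1 - e2pi x).im = - Real.sin (2*Real.pi*x) := by
  rw [e2pi_eq_cos_sin]; simp [← Complex.ofReal_cos, ← Complex.ofReal_sin]

lemma norm_one_sub_e2pi_ge_sin (x : ℝ) : |Real.sin (2*Real.pi*x)| ≤ ‖1 - e2pi x‖ := by
  have h := Complex.abs_im_le_norm (1 - e2pi x)
  rw [one_sub_e2pi_im, abs_neg] at h
  exact h

lemma norm_one_sub_e2pi_ge_cos (x : ℝ) : 1 - Real.cos (2*Real.pi*x) ≤ ‖1 - e2pi x‖ := by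
  have h := Complex.abs_re_le_norm (1 - e2pi x)
  rw [one_sub_e2pi_re] at h
  exact le_trans (le_abs_self _) h

lemma e2pi_neg (y : ℝ) : e2pi (-y) = (starRingEnd ℂ) (e2pi y) := by
  rw [e2pi_eq_cos_sin, e2pi_eq_cos_sin]
  rw [show 2*Real.pi*(-y) = -(2*Real.pi*y) by ring, Real.cos_neg, Real.sin_neg]
  apply Complex.ext <;>
    simp [← Complex.ofReal_cos, ← Complex.ofReal_sin]

lemma norm_one_sub_e2pi_neg (y : ℝ) : ‖1 - e2pi (-y)‖ = ‖1 - e2pi y‖ := by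
  rw [e2pi_neg]
  rw [show (1:ℂ) - (starRingEnd ℂ) (e2pi y) = (starRingEnd ℂ) (1 - e2pi y) by
    rw [map_sub, map_one]]
  rw [Complex.norm_conj]

lemma norm_one_sub_e2pi_ge_lin (x : ℝ) (h0 : 0 ≤ x) (h1 : x ≤ 1/4) : 4*x ≤ ‖1 - e2pi x‖ := by
  have hpi : 0 < Real.pi := Real.pi_pos
  have h2 : (0:ℝ) ≤ 2*Real.pi*x := by positivity
  have h3 : 2*Real.pi*x ≤ Real.pi/2 := by nlinarith
  have hj := Real.mul_le_sin h2 h3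
  have : 4*x ≤ Real.sin (2*Real.pi*x) := by
    have : 2/Real.pi * (2*Real.pi*x) = 4*x := by field_simp; ring
    linarith [hj, this.symm.le]
  calc 4*x ≤ Real.sin (2*Real.pi*x) := this
    _ ≤ |Real.sin (2*Real.pi*x)| := le_abs_self _
    _ ≤ ‖1 - e2pi x‖ := norm_one_sub_e2pi_ge_sin x

lemma norm_one_sub_e2pi_ge_one (x : ℝ) (h0 : 1/4 ≤ x) (h1 : x ≤ 3/4) : 1 ≤ ‖1 - e2pi x‖ := by
  have hpi : 0 < Real.pi := Real.pi_pos
  have hcos : Real.cos (2*Real.pi*x) ≤ 0 := by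
    apply Real.cos_nonpos_of_pi_div_two_le_of_le <;> nlinarith
  calc (1:ℝ) ≤ 1 - Real.cos (2*Real.pi*x) := by linarith
    _ ≤ ‖1 - e2pi x‖ := norm_one_sub_e2pi_ge_cos x

lemma exists_good_k (q K c : ℕ) (hq : 0 < q) (hc : 1 ≤ c) (hcq : 2*c ≤ q) (hK : 1 ≤ K) :
    ∃ k : ℕ, 1 ≤ k ∧ k ≤ K ∧ min 1 (4*(c:ℝ)*K/q) ≤ ‖1 - e2pi ((c:ℝ)*k/q)‖ := by
  have hq0 : (0:ℝ) < q := by exact_mod_cast hq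
  by_cases hcase : 4*c*K ≤ q
  · refine ⟨K, hK, le_refl _, ?_⟩
    have hx0 : (0:ℝ) ≤ (c:ℝ)*K/q := by positivity
    have hx1 : (c:ℝ)*K/q ≤ 1/4 := by
      rw [div_le_iff₀ hq0]
      have : (4:ℝ)*c*K ≤ q := by exact_mod_cast hcase
      linarith
    have := norm_one_sub_e2pi_ge_lin _ hx0 hx1
    have heq : (4:ℝ)*((c:ℝ)*K/q) = 4*(c:ℝ)*K/q := by ring
    rw [heq] at this
    exact le_trans (min_le_right _ _) this
  · push_neg at hcase
    have h4c : 0 < 4*c := by omega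
    have hkK : q/(4*c) + 1 ≤ K := by
      have : q/(4*c) < K := by
        rw [Nat.div_lt_iff_lt_mul h4c]
        calc q < 4*c*K := hcase
          _ = K*(4*c) := by ring
      omega
    refine ⟨q/(4*c) + 1, Nat.le_add_left 1 _, hkK, ?_⟩
    set k := q/(4*c) + 1 with hk
    have hfl_lt : (q:ℝ) < (k:ℝ)*(4*c) := by
      have h1 : q < k*(4*c) := by
        rw [hk]
        calc q < (q/(4*c))*(4*c) + (4*c) := Nat.lt_div_mul_add h4c
          _ = (q/(4*c) + 1)*(4*c) := by ring
      exact_mod_cast h1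
    have hfl_le : (c:ℝ)*(k:ℝ) ≤ 3*q/4 := by
      have h1 : ((q/(4*c) : ℕ):ℝ) ≤ (q:ℝ)/((4*c : ℕ):ℝ) := Nat.cast_div_le
      have h2 : ((4*c : ℕ):ℝ) = 4*(c:ℝ) := by push_cast; ring
      rw [h2] at h1
      have hc0 : (0:ℝ) < c := by exact_mod_cast hc
      have hkr : (k:ℝ) = ((q/(4*c) : ℕ):ℝ) + 1 := by rw [hk]; push_cast; ring
      have h3 : (c:ℝ)*(k:ℝ) ≤ c*((q:ℝ)/(4*c) + 1) := by
        rw [hkr]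
        apply mul_le_mul_of_nonneg_left _ hc0.le
        linarith
      have h4 : (c:ℝ)*((q:ℝ)/(4*c) + 1) = q/4 + c := by field_simp
      have h5 : (c:ℝ) ≤ q/2 := by
        have : ((2*c:ℕ):ℝ) ≤ (q:ℝ) := by exact_mod_cast hcq
        push_cast at this; linarith
      linarith
    have hx1 : 1/4 ≤ (c:ℝ)*k/q := by
      rw [le_div_iff₀ hq0]; nlinarith
    have hx2 : (c:ℝ)*k/q ≤ 3/4 := by
      rw [div_le_iff₀ hq0]; nlinarith
    calc min 1 (4*(c:ℝ)*K/q) ≤ 1 := min_le_left _ _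
      _ ≤ ‖1 - e2pi ((c:ℝ)*k/q)‖ := norm_one_sub_e2pi_ge_one _ hx1 hx2

lemma prod_min_lower (β : ℝ) (hβ : 0 ≤ β) : ∀ (n : ℕ) (S : Finset ℤ), S.card = n →
    (∀ x ∈ S, (1:ℤ) ≤ x) →
    (∏ i ∈ Finset.Icc 1 n, min 1 (β*(i:ℝ))) ≤ ∏ x ∈ S, min 1 (β*(x:ℝ)) := by
  intro n
  induction n with
  | zero =>
    intro S hcard _
    rw [Finset.card_eq_zero] at hcard
    subst hcard
    simp
  | succ n ih =>
    intro S hcard hS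
    have hne : S.Nonempty := by
      rw [← Finset.card_pos, hcard]; omega
    set M := S.max' hne with hM
    have hMS : M ∈ S := S.max'_mem hne
    have hM1 : (1:ℤ) ≤ M := hS M hMS
    have hsub : S ⊆ Finset.Icc 1 M := by
      intro x hx
      rw [Finset.mem_Icc]
      exact ⟨hS x hx, S.le_max' x hx⟩
    have hcardle : S.card ≤ (M.toNat) := by
      have := Finset.card_le_card hsub
      rwa [Int.card_Icc, show M + 1 - 1 = M by ring] at this
    have hMn : ((n:ℤ) + 1) ≤ M := by
      have : n + 1 ≤ M.toNat := by omega
      omega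
    have hprodS : ∏ x ∈ S, min 1 (β*(x:ℝ)) =
        min 1 (β*(M:ℝ)) * ∏ x ∈ S.erase M, min 1 (β*(x:ℝ)) :=
      (Finset.mul_prod_erase S _ hMS).symm
    have hIcc : Finset.Icc 1 (n+1) = insert (n+1) (Finset.Icc 1 n) := by
      rw [← Finset.insert_Icc_right_eq_Icc_add_one (by omega)]
    have hnotmem : (n+1) ∉ Finset.Icc 1 n := by simp
    rw [hprodS, hIcc, Finset.prod_insert hnotmem]
    have h1 : min 1 (β*((n+1:ℕ):ℝ)) ≤ min 1 (β*(M:ℝ)) := by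
      apply min_le_min (le_refl _)
      apply mul_le_mul_of_nonneg_left _ hβ
      have : ((n:ℤ)+1 : ℝ) ≤ (M:ℝ) := by exact_mod_cast hMn
      push_cast at this ⊢
      linarith
    have h2 := ih (S.erase M) (by rw [Finset.card_erase_of_mem hMS, hcard]; rfl)
      (fun x hx => hS x (Finset.mem_of_mem_erase hx))
    have hnn : (0:ℝ) ≤ ∏ i ∈ Finset.Icc 1 n, min 1 (β*(i:ℝ)) := by
      apply Finset.prod_nonneg
      intro i hi
      rw [Finset.mem_Icc] at hi
      exact le_min zero_le_one (by positivity)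
    have hnn2 : (0:ℝ) ≤ min 1 (β*((n+1:ℕ):ℝ)) := le_min zero_le_one (by positivity)
    calc min 1 (β*((n+1:ℕ):ℝ)) * ∏ i ∈ Finset.Icc 1 n, min 1 (β*(i:ℝ))
        ≤ min 1 (β*(M:ℝ)) * ∏ x ∈ S.erase M, min 1 (β*(x:ℝ)) := by
          apply mul_le_mul h1 h2 hnn (le_trans hnn2 h1)
      _ = _ := rfl

lemma pow_le_exp_mul_factorial : ∀ n : ℕ, (n:ℝ)^n ≤ (Real.exp 1)^n * (n.factorial : ℝ) := by
  intro n
  induction n with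
  | zero => simp
  | succ n ih =>
    rcases Nat.eq_zero_or_pos n with hn | hn
    · subst hn
      have h := Real.exp_one_gt_d9
      norm_num
    · have hn0 : (0:ℝ) < n := by exact_mod_cast hn
      have key : ((n:ℝ)+1)^n ≤ Real.exp 1 * (n:ℝ)^n := by
        have h1 : (1 + 1/(n:ℝ)) ≤ Real.exp (1/(n:ℝ)) := by
          have := Real.add_one_le_exp (1/(n:ℝ))
          linarith
        have h2 : (1 + 1/(n:ℝ))^n ≤ (Real.exp (1/(n:ℝ)))^n := by
          apply pow_le_pow_left₀ (by positivity) h1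
        have h3 : (Real.exp (1/(n:ℝ)))^n = Real.exp 1 := by
          rw [← Real.exp_nat_mul]
          congr 1
          field_simp
        have h4 : ((n:ℝ)+1)^n = (n:ℝ)^n * (1 + 1/(n:ℝ))^n := by
          rw [← mul_pow]
          congr 1
          field_simp
        rw [h4]
        calc (n:ℝ)^n * (1 + 1/(n:ℝ))^n ≤ (n:ℝ)^n * Real.exp 1 := by
              apply mul_le_mul_of_nonneg_left _ (by positivity)
              rw [← h3]; exact h2
          _ = Real.exp 1 * (n:ℝ)^n := by ring
      have hfac : ((n+1).factorial : ℝ) = ((n:ℝ)+1) * (n.factorial:ℝ) := by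
        rw [Nat.factorial_succ]; push_cast; ring
      have hexp0 : (0:ℝ) < Real.exp 1 := Real.exp_pos 1
      calc ((n+1:ℕ):ℝ)^(n+1) = ((n:ℝ)+1) * ((n:ℝ)+1)^n := by push_cast; ring
        _ ≤ ((n:ℝ)+1) * (Real.exp 1 * (n:ℝ)^n) := by
            apply mul_le_mul_of_nonneg_left key (by positivity)
        _ ≤ ((n:ℝ)+1) * (Real.exp 1 * ((Real.exp 1)^n * (n.factorial:ℝ))) := by
            apply mul_le_mul_of_nonneg_left _ (by positivity)
            apply mul_le_mul_of_nonneg_left ih hexp0.le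
        _ = (Real.exp 1)^(n+1) * (((n:ℝ)+1) * (n.factorial:ℝ)) := by ring
        _ = (Real.exp 1)^(n+1) * ((n+1).factorial : ℝ) := by rw [hfac]

lemma factorial_binom_lower (a b : ℕ) :
    ((a+b).factorial : ℝ) ≤ 2^(a+b) * (a.factorial * b.factorial) := by
  have h1 : (a+b).choose b * a.factorial * b.factorial = (a+b).factorial :=
    Nat.add_choose_mul_factorial_mul_factorial a b
  have h2 : (a+b).choose b ≤ 2^(a+b) := by
    have hmem : b ∈ Finset.range (a+b+1) := by
      rw [Finset.mem_range]; omega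
    calc (a+b).choose b ≤ ∑ m ∈ Finset.range (a+b+1), (a+b).choose m :=
          Finset.single_le_sum (fun i _ => Nat.zero_le _) hmem
      _ = 2^(a+b) := Nat.sum_range_choose (a+b)
  have : (a+b).factorial ≤ 2^(a+b) * (a.factorial * b.factorial) := by
    calc (a+b).factorial = (a+b).choose b * a.factorial * b.factorial := h1.symm
      _ ≤ 2^(a+b) * a.factorial * b.factorial :=
          Nat.mul_le_mul_right _ (Nat.mul_le_mul_right _ h2)
      _ = 2^(a+b) * (a.factorial * b.factorial) := by ring
  exact_mod_cast this

noncomputable def tlbE (q : ℕ) (m : ℤ) : ℂ := e2pi ((m:ℝ)/q)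

lemma tlbE_add (q : ℕ) (m m' : ℤ) : tlbE q (m+m') = tlbE q m * tlbE q m' := by
  unfold tlbE
  rw [← e2pi_add]
  congr 1
  push_cast
  exact add_div _ _ _

lemma tlbE_norm (q : ℕ) (m : ℤ) : ‖tlbE q m‖ = 1 := e2pi_norm _

lemma tlbE_period (q : ℕ) (hq : 0 < q) (m d : ℤ) : tlbE q (m + q*d) = tlbE q m := by
  rw [tlbE_add]
  have : tlbE q ((q:ℤ)*d) = 1 := by
    unfold tlbE
    have hq0 : (q:ℝ) ≠ 0 := by positivity
    rw [show (((q:ℤ)*d : ℤ):ℝ)/q = ((d:ℤ):ℝ) by push_cast; field_simp]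
    exact e2pi_int d
  rw [this, mul_one]

lemma tlbE_congr (q : ℕ) (hq : 0 < q) {m m' : ℤ} (h : (q:ℤ) ∣ (m - m')) :
    tlbE q m = tlbE q m' := by
  obtain ⟨d, hd⟩ := h
  have : m = m' + q*d := by linarith
  rw [this, tlbE_period q hq]

noncomputable def tlbS (N q : ℕ) (lam : ℕ → ℤ) (a : ℤ) : ℂ :=
  ∑ n ∈ Finset.Icc 1 N, e2pi ((lam n : ℝ) * a / q)

lemma tlbS_eq (N q : ℕ) (lam : ℕ → ℤ) (a : ℤ) :
    tlbS N q lam a = ∑ n ∈ Finset.Icc 1 N, tlbE q (lam n * a) := by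
  apply Finset.sum_congr rfl
  intro n _
  unfold tlbE
  congr 1
  push_cast
  ring

lemma tlb_spread (N q : ℕ) (hN : 0 < N) (hq : 0 < q) (lam : ℕ → ℤ) (t b : ℤ) (δ : ℝ)
    (hδ : 0 ≤ δ) (hb : 2^N * δ ≤ ‖tlbS N q lam b‖) :
    ∃ j : ℕ, 1 ≤ j ∧ j ≤ N ∧ δ ≤ ‖tlbS N q lam (b + (j:ℤ)*t)‖ := by
  by_contra hcon
  push_neg at hcon
  -- the difference operator
  set g : Finset ℕ → ℤ → ℂ := fun S a =>
    ∑ n ∈ Finset.Icc 1 N, tlbE q (lam n * a) * ∏ m ∈ S, (tlbE q (lam n * t) - tlbE q (lam m * t))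
    with hg
  have hrec : ∀ (S : Finset ℕ) (m : ℕ), m ∉ S → ∀ a : ℤ,
      g (insert m S) a = g S (a + t) - tlbE q (lam m * t) * g S a := by
    intro S m hm a
    rw [hg]
    simp only
    rw [Finset.mul_sum, ← Finset.sum_sub_distrib]
    apply Finset.sum_congr rfl
    intro n _
    rw [Finset.prod_insert hm]
    rw [show lam n * (a+t) = lam n * a + lam n * t by ring, tlbE_add]
    ring
  have hbound : ∀ (S : Finset ℕ) (a : ℤ) (M : ℝ), 0 ≤ M →
      (∀ j : ℕ, 1 ≤ j → j ≤ S.card → ‖tlbS N q lam (a + (j:ℤ)*t)‖ ≤ M) →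
      ‖g S a - (-1:ℂ)^S.card * (∏ m ∈ S, tlbE q (lam m * t)) * tlbS N q lam a‖
        ≤ (2^S.card - 1) * M := by
    intro S
    induction S using Finset.induction_on with
    | empty =>
      intro a M hM _
      have : g ∅ a = tlbS N q lam a := by
        rw [hg, tlbS_eq]; simp
      rw [this]
      simp
    | @insert m S hm ih =>
      intro a M hM hwin
      have hcard : (insert m S).card = S.card + 1 := Finset.card_insert_of_notMem hm
      have hkey : g (insert m S) a
            - (-1:ℂ)^(insert m S).card * (∏ m' ∈ insert m S, tlbE q (lam m' * t)) * tlbS N q lam a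
          = (g S (a+t) - (-1:ℂ)^S.card * (∏ m' ∈ S, tlbE q (lam m' * t)) * tlbS N q lam (a+t))
            - tlbE q (lam m * t) * (g S a - (-1:ℂ)^S.card * (∏ m' ∈ S, tlbE q (lam m' * t)) * tlbS N q lam a)
            + (-1:ℂ)^S.card * (∏ m' ∈ S, tlbE q (lam m' * t)) * tlbS N q lam (a+t) := by
        rw [hrec S m hm a, hcard, Finset.prod_insert hm]
        ring
      rw [hkey]
      have h1 : ‖g S (a+t) - (-1:ℂ)^S.card * (∏ m' ∈ S, tlbE q (lam m' * t)) * tlbS N q lam (a+t)‖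
          ≤ (2^S.card - 1) * M := by
        apply ih (a+t) M hM
        intro j hj1 hj2
        have := hwin (j+1) (by omega) (by omega)
        rw [show a + t + (j:ℤ)*t = a + ((j+1:ℕ):ℤ)*t by push_cast; ring]
        exact this
      have h2 : ‖g S a - (-1:ℂ)^S.card * (∏ m' ∈ S, tlbE q (lam m' * t)) * tlbS N q lam a‖
          ≤ (2^S.card - 1) * M := by
        apply ih a M hM
        intro j hj1 hj2
        exact hwin j hj1 (by omega)
      have h3 : ‖(-1:ℂ)^S.card * (∏ m' ∈ S, tlbE q (lam m' * t)) * tlbS N q lam (a+t)‖ ≤ M := by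
        rw [norm_mul, norm_mul, norm_pow, norm_neg, norm_one, one_pow, one_mul]
        have hprod : ‖∏ m' ∈ S, tlbE q (lam m' * t)‖ = 1 := by
          rw [norm_prod]
          apply Finset.prod_eq_one
          intro m' _
          exact tlbE_norm q _
        rw [hprod, one_mul]
        have := hwin 1 le_rfl (by omega)
        rw [show a + ((1:ℕ):ℤ)*t = a + t by push_cast; ring] at this
        exact this
      calc ‖_ - _ + _‖ ≤ ‖_ - _‖ + ‖(-1:ℂ)^S.card * (∏ m' ∈ S, tlbE q (lam m' * t)) * tlbS N q lam (a+t)‖ := norm_add_le _ _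
        _ ≤ (‖g S (a+t) - (-1:ℂ)^S.card * (∏ m' ∈ S, tlbE q (lam m' * t)) * tlbS N q lam (a+t)‖
              + ‖tlbE q (lam m * t) * (g S a - (-1:ℂ)^S.card * (∏ m' ∈ S, tlbE q (lam m' * t)) * tlbS N q lam a)‖) + M := by
            apply add_le_add _ h3
            exact norm_sub_le _ _
        _ ≤ ((2^S.card - 1) * M + (2^S.card - 1) * M) + M := by
            apply add_le_add_left
            apply add_le_add h1
            rw [norm_mul, tlbE_norm, one_mul]
            exact h2
        _ = (2^(insert m S).card - 1) * M := by
            rw [hcard]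
            ring
  -- the full product vanishes
  have hfull : g (Finset.Icc 1 N) b = 0 := by
    rw [hg]
    simp only
    apply Finset.sum_eq_zero
    intro n hn
    rw [Finset.prod_eq_zero hn (by ring), mul_zero]
  have hNcard : (Finset.Icc 1 N).card = N := by
    rw [Nat.card_Icc]
    omega
  have happ := hbound (Finset.Icc 1 N) b δ hδ (fun j hj1 hj2 => by
    rw [hNcard] at hj2
    exact (hcon j hj1 hj2).le)
  rw [hfull, hNcard, zero_sub, norm_neg, norm_mul, norm_mul, norm_pow, norm_neg, norm_one,
    one_pow, one_mul] at happ
  have hprod : ‖∏ m' ∈ Finset.Icc 1 N, tlbE q (lam m' * t)‖ = 1 := by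
    rw [norm_prod]
    apply Finset.prod_eq_one
    intro m' _
    exact tlbE_norm q _
  rw [hprod, one_mul] at happ
  have hδ0 : δ = 0 := by nlinarith [hb, happ]
  have := hcon 1 le_rfl hN
  rw [hδ0] at this
  exact absurd this (not_lt.mpr (norm_nonneg _))

lemma prod_Icc_beta (β : ℝ) : ∀ n : ℕ, ∏ i ∈ Finset.Icc 1 n, (β*(i:ℝ)) = β^n * (n.factorial:ℝ) := by
  intro n
  induction n with
  | zero => simp
  | succ n ih =>
    rw [← Finset.insert_Icc_right_eq_Icc_add_one (by omega), Finset.prod_insert (by simp), ih,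
      Nat.factorial_succ]
    push_cast
    ring

set_option maxHeartbeats 2000000 in
lemma tlb_anchor (N q : ℕ) (hN : 0 < N) (hq : 0 < q) (lam : ℕ → ℤ) (L : ℝ)
    (hL0 : 0 < L) (hL1 : L ≤ 1) (hNL : (N:ℝ)^2 ≤ q*L)
    (A B : ℤ) (hAB : A ≤ B) (hBA : q*L - 2 ≤ (B:ℝ) - A) :
    ∃ a₀ : ℤ, A ≤ a₀ ∧ a₀ ≤ B ∧ (L/50)^N ≤ ‖tlbS N q lam a₀‖ := by
  have hq' : (0:ℤ) < q := by exact_mod_cast hq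
  have hqR : (0:ℝ) < q := by exact_mod_cast hq
  have hL50 : 0 ≤ L/50 := by linarith
  have hL50' : L/50 ≤ 1 := by linarith
  -- residues
  set ρ : ℕ → ℤ := fun n => (lam n - lam 1) % q with hρ
  have hρ1 : ρ 1 = 0 := by simp [hρ]
  have hρnn : ∀ n, 0 ≤ ρ n := fun n => Int.emod_nonneg _ (by omega)
  have hρlt : ∀ n, ρ n < q := fun n => Int.emod_lt_of_pos _ hq'
  have hρcong : ∀ n, (q:ℤ) ∣ (lam n - (lam 1 + ρ n)) := by
    intro n
    have h := Int.emod_add_mul_ediv (lam n - lam 1) q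
    refine ⟨(lam n - lam 1)/q, ?_⟩
    simp only [hρ]
    linarith
  classical
  set W : Finset ℤ := ((Finset.Icc 1 N).image ρ).erase 0 with hW
  set R := W.card with hRdef
  have h1mem : (1:ℕ) ∈ Finset.Icc 1 N := by rw [Finset.mem_Icc]; omega
  have h0img : (0:ℤ) ∈ (Finset.Icc 1 N).image ρ := by
    rw [Finset.mem_image]; exact ⟨1, h1mem, hρ1⟩
  have hRN : R + 1 ≤ N := by
    have h1 : W.card + 1 = ((Finset.Icc 1 N).image ρ).card := by
      rw [hW, Finset.card_erase_of_mem h0img]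
      have : 1 ≤ ((Finset.Icc 1 N).image ρ).card :=
        Finset.card_pos.mpr ⟨0, h0img⟩
      omega
    have h2 : ((Finset.Icc 1 N).image ρ).card ≤ N := by
      calc ((Finset.Icc 1 N).image ρ).card ≤ (Finset.Icc 1 N).card := Finset.card_image_le
        _ = N := by rw [Nat.card_Icc]; omega
    omega
  have hWmem : ∀ w ∈ W, 1 ≤ w ∧ w ≤ (q:ℤ) - 1 := by
    intro w hw
    rw [hW, Finset.mem_erase, Finset.mem_image] at hw
    obtain ⟨hw0, n, _, hwn⟩ := hw
    constructor
    · have := hρnn n; rw [hwn] at this; omega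
    · have := hρlt n; rw [hwn] at this; omega
  -- trivial case : all residues vanish
  by_cases hWe : W = ∅
  · refine ⟨A, le_refl A, hAB, ?_⟩
    have hall : ∀ n ∈ Finset.Icc 1 N, ρ n = 0 := by
      intro n hn
      by_contra hne
      have : ρ n ∈ W := by
        rw [hW, Finset.mem_erase]
        exact ⟨hne, Finset.mem_image.mpr ⟨n, hn, rfl⟩⟩
      rw [hWe] at this
      exact absurd this (Finset.notMem_empty _)
    have hterm : ∀ n ∈ Finset.Icc 1 N, tlbE q (lam n * A) = tlbE q (lam 1 * A) := by
      intro n hn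
      apply tlbE_congr q hq
      have h := hρcong n
      rw [hall n hn, add_zero] at h
      obtain ⟨d, hd⟩ := h
      exact ⟨d*A, by rw [show lam n * A - lam 1 * A = (lam n - lam 1)*A by ring, hd]; ring⟩
    have hsum : tlbS N q lam A = (N:ℂ) * tlbE q (lam 1 * A) := by
      rw [tlbS_eq, Finset.sum_congr rfl hterm, Finset.sum_const, Nat.card_Icc,
        show N+1-1 = N by omega]
      simp [nsmul_eq_mul]
    rw [hsum, norm_mul, tlbE_norm, mul_one]
    have : ‖(N:ℂ)‖ = (N:ℝ) := by
      rw [Complex.norm_natCast]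
    rw [this]
    calc (L/50)^N ≤ 1 := pow_le_one₀ hL50 hL50'
      _ ≤ (N:ℝ) := by exact_mod_cast hN
  -- main case
  have hR1 : 1 ≤ R := by
    rw [hRdef]
    exact Finset.card_pos.mpr (Finset.nonempty_iff_ne_empty.mpr hWe)
  have hRR : (1:ℝ) ≤ R := by exact_mod_cast hR1
  have hRN' : (R:ℝ) + 1 ≤ N := by exact_mod_cast hRN
  -- budget
  set K : ℕ := (B - A).toNat / R with hK
  have hBAnat : ((B - A).toNat : ℤ) = B - A := Int.toNat_of_nonneg (by omega)
  have hKR : (R:ℤ) * K ≤ B - A := by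
    have h1 : K * R ≤ (B - A).toNat := Nat.div_mul_le_self _ _
    have h2 : ((K * R : ℕ):ℤ) ≤ ((B - A).toNat : ℤ) := by exact_mod_cast h1
    rw [hBAnat] at h2
    push_cast at h2
    linarith
  have hKlow : R + 1 ≤ K := by
    rw [hK, Nat.le_div_iff_mul_le (by omega)]
    -- (R+1)*R ≤ (B-A).toNat
    have h1 : ((R:ℝ) + 1)^2 ≤ q*L := by
      calc ((R:ℝ)+1)^2 ≤ (N:ℝ)^2 := by
            apply pow_le_pow_left₀ (by positivity) hRN'
        _ ≤ q*L := hNL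
    have h2 : ((R:ℝ)+1)^2 - 2 ≤ (B:ℝ) - A := by linarith
    have h3 : ((R+1)*R : ℕ) ≤ (B - A).toNat := by
      have h4 : (((R+1)*R : ℕ) : ℝ) ≤ ((B-A).toNat : ℝ) := by
        have h5 : (((B-A).toNat : ℤ) : ℝ) = (B:ℝ) - A := by
          rw [hBAnat]; push_cast; ring
        push_cast
        push_cast at h5
        nlinarith
      exact_mod_cast h4
    exact h3
  have hK1 : 1 ≤ K := by omega
  have h4KR : (q:ℝ)*L ≤ 4*K*R := by
    have h1 : (B - A).toNat < K*R + R := by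
      rw [hK]
      calc (B-A).toNat < (B-A).toNat/R*R + R := Nat.lt_div_mul_add (by omega)
        _ = K*R + R := by rw [hK]
    have h2 : (B:ℝ) - A < K*R + R := by
      have : (((B-A).toNat:ℤ):ℝ) = (B:ℝ) - A := by rw [hBAnat]; push_cast; ring
      rw [← this]
      exact_mod_cast h1
    have hKR' : (R:ℝ) + 1 ≤ K := by exact_mod_cast hKlow
    nlinarith
  have h4Kq : L/R ≤ 4*K/q := by
    rw [div_le_div_iff₀ (by positivity) hqR]
    nlinarith
  -- choice of steps
  have hkchoice : ∀ w : ℤ, ∃ k : ℕ, w ∈ W →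
      (1 ≤ k ∧ k ≤ K ∧ min 1 ((L/R) * ((min w ((q:ℤ)-w) : ℤ):ℝ)) ≤ ‖1 - tlbE q (w * k)‖) := by
    intro w
    by_cases hw : w ∈ W
    swap
    · exact ⟨1, fun h => absurd h hw⟩
    obtain ⟨hw1, hw2⟩ := hWmem w hw
    set c : ℤ := min w ((q:ℤ) - w) with hc
    have hc1 : 1 ≤ c := by omega
    have hc2 : 2*c ≤ q := by omega
    set cn : ℕ := c.toNat with hcn
    have hcnc : (cn:ℤ) = c := Int.toNat_of_nonneg (by omega)
    have hcn1 : 1 ≤ cn := by omega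
    have hcn2 : 2*cn ≤ q := by omega
    obtain ⟨k, hk1, hkK, hkb⟩ := exists_good_k q K cn hq hcn1 hcn2 hK1
    refine ⟨k, fun _ => ⟨hk1, hkK, ?_⟩⟩
    -- rewrite the norm
    have hnorm : ‖1 - e2pi ((cn:ℝ)*k/q)‖ = ‖1 - tlbE q (w * k)‖ := by
      by_cases hside : w ≤ (q:ℤ) - w
      · have hcw : c = w := by omega
        have hcr : ((cn:ℕ):ℝ) = (w:ℝ) := by
          have h := hcnc
          rw [hcw] at h
          exact_mod_cast h
        unfold tlbE
        have harg : ((w*k : ℤ):ℝ)/(q:ℝ) = (cn:ℝ)*(k:ℝ)/(q:ℝ) := by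
          push_cast
          rw [hcr]
        rw [harg]
      · have hcw : c = (q:ℤ) - w := by omega
        have hwk : w * k = -(c*k) + (q:ℤ)*k := by rw [hcw]; ring
        rw [hwk, tlbE_period q hq]
        have harg : ((-(c*k) : ℤ):ℝ)/q = -((cn:ℝ)*k/q) := by
          rw [← hcnc]; push_cast; ring
        unfold tlbE
        rw [harg, norm_one_sub_e2pi_neg]
    rw [← hnorm]
    refine le_trans ?_ hkb
    apply min_le_min (le_refl _)
    rw [← hcnc]
    have hcpos : (0:ℝ) ≤ (cn:ℝ) := by positivity
    calc L/R * ((cn:ℕ):ℝ) = (cn:ℝ) * (L/R) := by push_cast; ring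
      _ ≤ (cn:ℝ) * (4*K/q) := mul_le_mul_of_nonneg_left h4Kq hcpos
      _ = 4*(cn:ℝ)*K/q := by ring
  choose kf hkf using hkchoice
  -- difference operator over residues
  set gA : Finset ℤ → ℤ → ℂ := fun S a =>
    ∑ n ∈ Finset.Icc 1 N, tlbE q (lam n * a) *
      ∏ w ∈ S, (tlbE q (lam n * (kf w)) - tlbE q ((lam 1 + w) * (kf w)))
    with hgA
  have hrecA : ∀ (S : Finset ℤ) (w : ℤ), w ∉ S → ∀ a : ℤ,
      gA (insert w S) a = gA S (a + kf w) - tlbE q ((lam 1 + w) * kf w) * gA S a := by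
    intro S w hw a
    rw [hgA]
    simp only
    rw [Finset.mul_sum, ← Finset.sum_sub_distrib]
    apply Finset.sum_congr rfl
    intro n _
    rw [Finset.prod_insert hw,
      show lam n * (a + kf w) = lam n * a + lam n * kf w by ring, tlbE_add]
    ring
  have hboundA : ∀ (S : Finset ℤ) (a : ℤ) (M : ℝ), 0 ≤ M →
      (∀ b : ℤ, a ≤ b → b ≤ a + ∑ w ∈ S, (kf w : ℤ) → ‖tlbS N q lam b‖ ≤ M) →
      ‖gA S a‖ ≤ 2^S.card * M := by
    intro S
    induction S using Finset.induction_on with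
    | empty =>
      intro a M hM hwin
      have hempty : gA ∅ a = tlbS N q lam a := by
        rw [hgA, tlbS_eq]; simp
      rw [hempty]
      simpa using hwin a le_rfl (by simp)
    | @insert w S hw ih =>
      intro a M hM hwin
      rw [hrecA S w hw a]
      have hsum : ∑ w' ∈ insert w S, (kf w' : ℤ) = (kf w : ℤ) + ∑ w' ∈ S, (kf w' : ℤ) :=
        Finset.sum_insert hw
      have hknn : (0:ℤ) ≤ (kf w : ℤ) := Int.natCast_nonneg _
      have hsnn : (0:ℤ) ≤ ∑ w' ∈ S, (kf w' : ℤ) :=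
        Finset.sum_nonneg (fun _ _ => Int.natCast_nonneg _)
      have h1 : ‖gA S (a + kf w)‖ ≤ 2^S.card * M := by
        apply ih _ M hM
        intro b hb1 hb2
        apply hwin b (by omega) (by rw [hsum]; omega)
      have h2 : ‖gA S a‖ ≤ 2^S.card * M := by
        apply ih _ M hM
        intro b hb1 hb2
        exact hwin b hb1 (by rw [hsum]; omega)
      calc ‖gA S (a + kf w) - tlbE q ((lam 1 + w) * kf w) * gA S a‖
          ≤ ‖gA S (a + kf w)‖ + ‖tlbE q ((lam 1 + w) * kf w) * gA S a‖ := norm_sub_le _ _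
        _ ≤ 2^S.card * M + 2^S.card * M := by
            apply add_le_add h1
            rw [norm_mul, tlbE_norm, one_mul]
            exact h2
        _ = 2^(insert w S).card * M := by
            rw [Finset.card_insert_of_notMem hw]
            ring
  -- evaluation at the full residue set
  set m₁ : ℕ := ((Finset.Icc 1 N).filter (fun n => ρ n = 0)).card with hm₁
  have hm₁1 : 1 ≤ m₁ := by
    rw [hm₁]
    exact Finset.card_pos.mpr ⟨1, Finset.mem_filter.mpr ⟨h1mem, hρ1⟩⟩
  have hevalA : ‖gA W A‖ = m₁ * ∏ w ∈ W, ‖1 - tlbE q (w * kf w)‖ := by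
    have hzero : ∀ n ∈ (Finset.Icc 1 N).filter (fun n => ¬ ρ n = 0),
        tlbE q (lam n * A) *
          ∏ w ∈ W, (tlbE q (lam n * kf w) - tlbE q ((lam 1 + w) * kf w)) = 0 := by
      intro n hn
      rw [Finset.mem_filter] at hn
      obtain ⟨hn1, hn2⟩ := hn
      have hmem : ρ n ∈ W := by
        rw [hW, Finset.mem_erase]
        exact ⟨hn2, Finset.mem_image.mpr ⟨n, hn1, rfl⟩⟩
      have hfac0 : tlbE q (lam n * kf (ρ n)) - tlbE q ((lam 1 + ρ n) * kf (ρ n)) = 0 := by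
        have hEq : tlbE q (lam n * kf (ρ n)) = tlbE q ((lam 1 + ρ n) * kf (ρ n)) := by
          apply tlbE_congr q hq
          obtain ⟨d, hd⟩ := hρcong n
          exact ⟨d * kf (ρ n), by
            rw [show lam n * kf (ρ n) - (lam 1 + ρ n) * kf (ρ n)
              = (lam n - (lam 1 + ρ n)) * kf (ρ n) by ring, hd]; ring⟩
        rw [hEq, sub_self]
      rw [Finset.prod_eq_zero hmem hfac0, mul_zero]
    have hval : ∀ n ∈ (Finset.Icc 1 N).filter (fun n => ρ n = 0),
        tlbE q (lam n * A) *
          ∏ w ∈ W, (tlbE q (lam n * kf w) - tlbE q ((lam 1 + w) * kf w))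
        = tlbE q (lam 1 * A) *
          ∏ w ∈ W, (tlbE q (lam 1 * kf w) * (1 - tlbE q (w * kf w))) := by
      intro n hn
      rw [Finset.mem_filter] at hn
      obtain ⟨hn1, hn2⟩ := hn
      have hdvd : (q:ℤ) ∣ lam n - lam 1 := by
        have h := hρcong n
        rw [hn2, add_zero] at h
        exact h
      obtain ⟨d, hd⟩ := hdvd
      have hEn : ∀ x : ℤ, tlbE q (lam n * x) = tlbE q (lam 1 * x) := by
        intro x
        apply tlbE_congr q hq
        exact ⟨d*x, by
          rw [show lam n * x - lam 1 * x = (lam n - lam 1) * x by ring, hd]; ring⟩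
      rw [hEn]
      congr 1
      apply Finset.prod_congr rfl
      intro w _
      rw [hEn, show (lam 1 + w) * kf w = lam 1 * kf w + w * kf w by ring, tlbE_add]
      ring
    have hgWA : gA W A = (m₁:ℂ) *
        (tlbE q (lam 1 * A) * ∏ w ∈ W, (tlbE q (lam 1 * kf w) * (1 - tlbE q (w * kf w)))) := by
      rw [hgA]
      simp only
      rw [← Finset.sum_filter_add_sum_filter_not (Finset.Icc 1 N) (fun n => ρ n = 0)]
      rw [Finset.sum_congr rfl hval, Finset.sum_eq_zero hzero, add_zero,
        Finset.sum_const, ← hm₁, nsmul_eq_mul]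
    rw [hgWA, norm_mul, norm_mul, tlbE_norm, one_mul, Complex.norm_natCast, norm_prod]
    congr 1
    apply Finset.prod_congr rfl
    intro w _
    rw [norm_mul, tlbE_norm, one_mul]
  -- lower bound for the product of factors
  set β : ℝ := L/R with hβ
  have hβ0 : 0 ≤ β := by positivity
  have hRne : (R:ℝ) ≠ 0 := by positivity
  have hprodmin : ∏ w ∈ W, min 1 (β * ((min w ((q:ℤ)-w) : ℤ):ℝ))
      ≤ ∏ w ∈ W, ‖1 - tlbE q (w * kf w)‖ := by
    apply Finset.prod_le_prod
    · intro w hw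
      have h1 := (hWmem w hw).1
      have h2 := (hWmem w hw).2
      have h4 : (0:ℝ) ≤ ((min w ((q:ℤ)-w) : ℤ):ℝ) := by
        have h3 : (0:ℤ) ≤ min w ((q:ℤ)-w) := by omega
        exact_mod_cast h3
      exact le_min zero_le_one (mul_nonneg hβ0 h4)
    · intro w hw
      exact (hkf w hw).2.2
  set W₁ : Finset ℤ := W.filter (fun w => 2*w ≤ (q:ℤ)) with hW₁
  set W₂ : Finset ℤ := W.filter (fun w => ¬ 2*w ≤ (q:ℤ)) with hW₂
  set n₁ := W₁.card with hn₁
  set n₂ := W₂.card with hn₂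
  have hncard : n₁ + n₂ = R := by
    rw [hn₁, hn₂, hW₁, hW₂, hRdef]
    exact Finset.card_filter_add_card_filter_not _
  have hsplit : ∏ w ∈ W, min 1 (β * ((min w ((q:ℤ)-w) : ℤ):ℝ))
      = (∏ w ∈ W₁, min 1 (β * ((w:ℤ):ℝ)))
        * (∏ w ∈ W₂, min 1 (β * (((q:ℤ)-w : ℤ):ℝ))) := by
    rw [← Finset.prod_filter_mul_prod_filter_not W (fun w => 2*w ≤ (q:ℤ))]
    congr 1
    · apply Finset.prod_congr rfl
      intro w hw
      rw [Finset.mem_filter] at hw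
      have hmin : min w ((q:ℤ)-w) = w := by omega
      rw [hmin]
    · apply Finset.prod_congr rfl
      intro w hw
      rw [Finset.mem_filter] at hw
      have hmin : min w ((q:ℤ)-w) = (q:ℤ)-w := by omega
      rw [hmin]
  have hlow1 : ∏ i ∈ Finset.Icc 1 n₁, min 1 (β*(i:ℝ)) ≤ ∏ w ∈ W₁, min 1 (β * ((w:ℤ):ℝ)) := by
    apply prod_min_lower β hβ0 n₁ W₁ rfl
    intro x hx
    rw [hW₁, Finset.mem_filter] at hx
    exact (hWmem x hx.1).1
  have hinj2 : ∀ x ∈ W₂, ∀ y ∈ W₂, (q:ℤ) - x = (q:ℤ) - y → x = y := by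
    intro x _ y _ h
    omega
  have hlow2 : ∏ i ∈ Finset.Icc 1 n₂, min 1 (β*(i:ℝ)) ≤ ∏ w ∈ W₂, min 1 (β * (((q:ℤ)-w : ℤ):ℝ)) := by
    have himg : ∏ w ∈ W₂.image (fun w => (q:ℤ) - w), min 1 (β * ((w:ℤ):ℝ))
        = ∏ w ∈ W₂, min 1 (β * (((q:ℤ)-w : ℤ):ℝ)) := Finset.prod_image hinj2
    rw [← himg]
    apply prod_min_lower β hβ0 n₂ _ ?_ ?_
    · rw [Finset.card_image_of_injOn hinj2]
    · intro x hx
      rw [Finset.mem_image] at hx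
      obtain ⟨w, hw, hwx⟩ := hx
      rw [hW₂, Finset.mem_filter] at hw
      have := (hWmem w hw.1).2
      omega
  have heval : ∀ n : ℕ, n ≤ R → ∏ i ∈ Finset.Icc 1 n, min 1 (β*(i:ℝ)) = β^n * (n.factorial:ℝ) := by
    intro n hn
    rw [← prod_Icc_beta]
    apply Finset.prod_congr rfl
    intro i hi
    rw [Finset.mem_Icc] at hi
    apply min_eq_right
    have h1 : (i:ℝ) ≤ (R:ℝ) := by
      have : i ≤ R := le_trans hi.2 hn
      exact_mod_cast this
    calc β*(i:ℝ) ≤ β*(R:ℝ) := mul_le_mul_of_nonneg_left h1 hβ0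
      _ = L := by rw [hβ]; field_simp
      _ ≤ 1 := hL1
  -- window point of maximum
  set SK : ℤ := ∑ w ∈ W, (kf w : ℤ) with hSK
  have hSKnn : 0 ≤ SK := Finset.sum_nonneg (fun _ _ => Int.natCast_nonneg _)
  have hSKle : A + SK ≤ B := by
    have h1 : SK ≤ (W.card) • (K:ℤ) := by
      rw [hSK]
      apply Finset.sum_le_card_nsmul
      intro w hw
      exact_mod_cast (hkf w hw).2.1
    have h2 : (W.card) • (K:ℤ) = (R:ℤ) * K := by
      rw [hRdef, nsmul_eq_mul]
    rw [h2] at h1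
    omega
  obtain ⟨a₀, ha₀mem, ha₀max⟩ := Finset.exists_max_image (Finset.Icc A (A+SK))
    (fun b => ‖tlbS N q lam b‖) ⟨A, Finset.mem_Icc.mpr ⟨le_refl A, by omega⟩⟩
  rw [Finset.mem_Icc] at ha₀mem
  refine ⟨a₀, ha₀mem.1, le_trans ha₀mem.2 hSKle, ?_⟩
  have hfin := hboundA W A ‖tlbS N q lam a₀‖ (norm_nonneg _)
    (fun b hb1 hb2 => ha₀max b (Finset.mem_Icc.mpr ⟨hb1, hb2⟩))
  -- numeric conclusion
  have hexp := Real.exp_one_lt_d9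
  have hexp0 : (0:ℝ) < Real.exp 1 := Real.exp_pos 1
  have hchain1 : (β^R * ((n₁.factorial : ℝ) * (n₂.factorial : ℝ))) ≤ ‖gA W A‖ := by
    rw [hevalA]
    have hm₁R : (1:ℝ) ≤ (m₁:ℝ) := by exact_mod_cast hm₁1
    have hprodnn : (0:ℝ) ≤ ∏ w ∈ W, ‖1 - tlbE q (w * kf w)‖ :=
      Finset.prod_nonneg (fun _ _ => norm_nonneg _)
    calc β^R * ((n₁.factorial : ℝ) * (n₂.factorial : ℝ))
        = (β^n₁ * n₁.factorial) * (β^n₂ * n₂.factorial) := by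
          rw [← hncard]; ring
      _ = (∏ i ∈ Finset.Icc 1 n₁, min 1 (β*(i:ℝ))) * (∏ i ∈ Finset.Icc 1 n₂, min 1 (β*(i:ℝ))) := by
          rw [heval n₁ (by omega), heval n₂ (by omega)]
      _ ≤ (∏ w ∈ W₁, min 1 (β * ((w:ℤ):ℝ))) * (∏ w ∈ W₂, min 1 (β * (((q:ℤ)-w : ℤ):ℝ))) := by
          have hnn1 : (0:ℝ) ≤ ∏ i ∈ Finset.Icc 1 n₂, min 1 (β*(i:ℝ)) := by
            apply Finset.prod_nonneg
            intro i hi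
            exact le_min zero_le_one (mul_nonneg hβ0 (by positivity))
          have hnn2 : (0:ℝ) ≤ ∏ w ∈ W₁, min 1 (β * ((w:ℤ):ℝ)) := by
            apply Finset.prod_nonneg
            intro w hw
            rw [hW₁, Finset.mem_filter] at hw
            have hw1 := (hWmem w hw.1).1
            have hcast : (0:ℝ) ≤ ((w:ℤ):ℝ) := by exact_mod_cast (by omega : (0:ℤ) ≤ w)
            exact le_min zero_le_one (mul_nonneg hβ0 hcast)
          exact mul_le_mul hlow1 hlow2 hnn1 hnn2
      _ = ∏ w ∈ W, min 1 (β * ((min w ((q:ℤ)-w) : ℤ):ℝ)) := hsplit.symm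
      _ ≤ ∏ w ∈ W, ‖1 - tlbE q (w * kf w)‖ := hprodmin
      _ ≤ m₁ * ∏ w ∈ W, ‖1 - tlbE q (w * kf w)‖ :=
          le_mul_of_one_le_left hprodnn hm₁R
  have hcard_eq : W.card = R := hRdef.symm
  rw [hcard_eq] at hfin
  have hfacR : ((R.factorial:ℝ)) ≤ 2^R * ((n₁.factorial:ℝ) * (n₂.factorial:ℝ)) := by
    have := factorial_binom_lower n₁ n₂
    rw [hncard] at this
    exact this
  have hRfac : (R:ℝ)^R ≤ (Real.exp 1)^R * (R.factorial:ℝ) := pow_le_exp_mul_factorial R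
  -- put everything together : ‖s a₀‖ ≥ (L/(4e))^R
  set F : ℝ := (n₁.factorial : ℝ) * (n₂.factorial : ℝ) with hF
  have hFnn : (0:ℝ) ≤ F := by positivity
  have hβnn : (0:ℝ) ≤ β^R := pow_nonneg hβ0 R
  have hstep1 : (L/(2*Real.exp 1))^R ≤ β^R * F := by
    have hβR : β^R * (R:ℝ)^R = L^R := by
      rw [← mul_pow]
      congr 1
      rw [hβ]
      field_simp
    have t1 : β^R * (R:ℝ)^R ≤ β^R * ((Real.exp 1)^R * (R.factorial:ℝ)) :=
      mul_le_mul_of_nonneg_left hRfac hβnn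
    have t2 : β^R * ((Real.exp 1)^R * (R.factorial:ℝ))
        ≤ β^R * ((Real.exp 1)^R * (2^R * F)) := by
      apply mul_le_mul_of_nonneg_left _ hβnn
      apply mul_le_mul_of_nonneg_left _ (by positivity)
      rw [hF]
      exact hfacR
    have h3 : L^R ≤ β^R * ((Real.exp 1)^R * (2^R * F)) := by
      calc L^R = β^R * (R:ℝ)^R := hβR.symm
        _ ≤ _ := le_trans t1 t2
    have h2e : (0:ℝ) < (2*Real.exp 1)^R := by positivity
    rw [div_pow, div_le_iff₀ h2e]
    calc L^R ≤ β^R * ((Real.exp 1)^R * (2^R * F)) := h3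
      _ = β^R * F * (2*Real.exp 1)^R := by rw [mul_pow]; ring
  have hfinal : (L/(4*Real.exp 1))^R ≤ ‖tlbS N q lam a₀‖ := by
    have h4 : (L/(2*Real.exp 1))^R ≤ ‖gA W A‖ := by
      apply le_trans hstep1
      calc β^R * F = β^R * ((n₁.factorial : ℝ) * (n₂.factorial : ℝ)) := by rw [hF]
        _ ≤ ‖gA W A‖ := hchain1
    have h5 : ‖gA W A‖ ≤ 2^R * ‖tlbS N q lam a₀‖ := hfin
    have h6 : (L/(4*Real.exp 1))^R * 2^R = (L/(2*Real.exp 1))^R := by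
      rw [← mul_pow]
      congr 1
      field_simp
      ring
    have h7 : (L/(4*Real.exp 1))^R * 2^R ≤ ‖tlbS N q lam a₀‖ * 2^R := by
      rw [h6]
      calc (L/(2*Real.exp 1))^R ≤ 2^R * ‖tlbS N q lam a₀‖ := le_trans h4 h5
        _ = ‖tlbS N q lam a₀‖ * 2^R := by ring
    have h8 : (0:ℝ) < 2^R := by positivity
    exact le_of_mul_le_mul_right h7 h8
  have hle1 : (L/50)^N ≤ (L/50)^R := pow_le_pow_of_le_one hL50 hL50' (by omega)
  have hle2 : (L/50)^R ≤ (L/(4*Real.exp 1))^R := by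
    apply pow_le_pow_left₀ hL50
    apply div_le_div_of_nonneg_left hL0.le ?_ ?_
    · positivity
    · nlinarith [hexp]
  exact le_trans hle1 (le_trans hle2 hfinal)


set_option maxHeartbeats 2000000 in
/-- Lemma (Turán-type lower bound): for integers `λ₁,…,λ_N`, `q ≥ 1`, and a
closed interval `I = [u,v] ⊆ [0,1]` with `|I| ≥ N²/q`, the number of integers
`a` with `a/q ∈ I` and `|∑_{n=1}^N e(λ_n a/q)| ≥ (|I|/100)^N` is at least
`q|I|/(100N)²`. -/
theorem turan_lower_bound
    (N : ℕ) (hN : 0 < N) (lam : ℕ → ℤ) (q : ℕ) (hq : 0 < q)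
    (u v : ℝ) (hu : 0 ≤ u) (huv : u ≤ v) (hv : v ≤ 1)
    (hlen : (N : ℝ) ^ 2 / q ≤ v - u) :
    (q : ℝ) * (v - u) / (100 * N) ^ 2 ≤
      ({a : ℤ | (a : ℝ) / q ∈ Set.Icc u v ∧
          ((v - u) / 100) ^ N ≤
            ‖∑ n ∈ Finset.Icc 1 N, e2pi ((lam n : ℝ) * a / q)‖}.ncard : ℝ) := by
  have hqR : (0:ℝ) < q := by exact_mod_cast hq
  have hNR : (1:ℝ) ≤ N := by exact_mod_cast hN
  set L : ℝ := v - u with hL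
  have hNL : (N:ℝ)^2 ≤ q*L := by
    rw [div_le_iff₀ hqR] at hlen
    calc (N:ℝ)^2 ≤ L * q := hlen
      _ = q*L := by ring
  have hL0 : 0 < L := by nlinarith
  have hL1 : L ≤ 1 := by rw [hL]; linarith
  have hqL1 : 1 ≤ (q:ℝ)*L := by nlinarith
  set A : ℤ := ⌈(q:ℝ)*u⌉ with hA
  set B : ℤ := ⌊(q:ℝ)*v⌋ with hB
  have hAu : (q:ℝ)*u ≤ A := Int.le_ceil _
  have hAu2 : (A:ℝ) < q*u + 1 := Int.ceil_lt_add_one _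
  have hBv : (B:ℝ) ≤ q*v := Int.floor_le _
  have hBv2 : (q:ℝ)*v - 1 < B := Int.sub_one_lt_floor _
  have hAB : A ≤ B := by
    rw [hB]
    apply Int.le_floor.mpr
    have : (q:ℝ)*v = q*u + q*L := by rw [hL]; ring
    linarith
  have hBA : (q:ℝ)*L - 2 ≤ (B:ℝ) - A := by
    have : (q:ℝ)*v = q*u + q*L := by rw [hL]; ring
    linarith
  set G : Set ℤ := {a : ℤ | (a : ℝ) / q ∈ Set.Icc u v ∧
      ((v - u) / 100) ^ N ≤ ‖∑ n ∈ Finset.Icc 1 N, e2pi ((lam n : ℝ) * a / q)‖} with hG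
  have hGsub : G ⊆ Set.Icc A B := by
    intro a ha
    rw [hG, Set.mem_setOf_eq] at ha
    obtain ⟨⟨h1, h2⟩, _⟩ := ha
    rw [Set.mem_Icc]
    constructor
    · rw [hA]
      apply Int.ceil_le.mpr
      rw [le_div_iff₀ hqR] at h1
      linarith
    · rw [hB]
      apply Int.le_floor.mpr
      rw [div_le_iff₀ hqR] at h2
      linarith
  have hGfin : G.Finite := Set.Finite.subset (Set.finite_Icc A B) hGsub
  have hmemG : ∀ a : ℤ, A ≤ a → a ≤ B → (L/100)^N ≤ ‖tlbS N q lam a‖ → a ∈ G := by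
    intro a h1 h2 h3
    rw [hG, Set.mem_setOf_eq]
    refine ⟨⟨?_, ?_⟩, ?_⟩
    · rw [le_div_iff₀ hqR]
      have : (A:ℝ) ≤ a := by exact_mod_cast h1
      linarith
    · rw [div_le_iff₀ hqR]
      have : (a:ℝ) ≤ B := by exact_mod_cast h2
      linarith
    · exact h3
  obtain ⟨a₀, ha₀A, ha₀B, ha₀⟩ := tlb_anchor N q hN hq lam L hL0 hL1 hNL A B hAB hBA
  have ha₀G : a₀ ∈ G := by
    apply hmemG a₀ ha₀A ha₀B
    apply le_trans _ ha₀
    apply pow_le_pow_left₀ (by positivity)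
    apply div_le_div_of_nonneg_left hL0.le (by norm_num) (by norm_num)
  -- direction of spreading
  obtain ⟨ε, D, hε, hDnn, hD2, hcont⟩ : ∃ (ε D : ℤ), (ε = 1 ∨ ε = -1) ∧ 0 ≤ D ∧
      (B:ℤ) - A ≤ 2*D ∧ (∀ m : ℤ, 0 ≤ m → m ≤ D → A ≤ a₀ + ε*m ∧ a₀ + ε*m ≤ B) := by
    rcases le_or_gt (B - a₀) (a₀ - A) with h | h
    · exact ⟨-1, a₀ - A, Or.inr rfl, by omega, by omega,
        fun m hm1 hm2 => ⟨by omega, by omega⟩⟩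
    · exact ⟨1, B - a₀, Or.inl rfl, by omega, by omega,
        fun m hm1 hm2 => ⟨by omega, by omega⟩⟩
  set T : ℕ := (D / (N:ℤ)).toNat with hT
  have hNne : ((N:ℤ)) ≠ 0 := by exact_mod_cast hN.ne'
  have hTD : ((T:ℕ):ℤ) = D / (N:ℤ) := by
    rw [hT]
    exact Int.toNat_of_nonneg (Int.ediv_nonneg hDnn (by exact_mod_cast hN.le))
  have hNT : (N:ℤ)*T ≤ D := by
    rw [hTD, mul_comm]
    exact Int.ediv_mul_le D hNne
  have hNTD : (D:ℝ) - N < (N:ℝ)*T := by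
    have h2 : D - (N:ℤ) < (N:ℤ)*(D/(N:ℤ)) := by
      have h3 := Int.emod_add_mul_ediv D (N:ℤ)
      have h4 : D % (N:ℤ) < N := Int.emod_lt_of_pos D (by exact_mod_cast hN)
      omega
    rw [← hTD] at h2
    exact_mod_cast h2
  -- witnesses
  have hwit : ∀ t : ℕ, ∃ j : ℕ, t ∈ Finset.Icc 1 T →
      (1 ≤ j ∧ j ≤ N ∧ (a₀ + ε*((j*t : ℕ):ℤ)) ∈ G) := by
    intro t
    by_cases ht : t ∈ Finset.Icc 1 T
    swap
    · exact ⟨1, fun h => absurd h ht⟩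
    rw [Finset.mem_Icc] at ht
    have hanchor : 2^N * ((L/100)^N) ≤ ‖tlbS N q lam a₀‖ := by
      rw [show (2:ℝ)^N * (L/100)^N = (L/50)^N by
        rw [← mul_pow]; congr 1; field_simp; ring]
      exact ha₀
    obtain ⟨j, hj1, hjN, hjs⟩ := tlb_spread N q hN hq lam (ε*(t:ℤ)) a₀ ((L/100)^N)
      (by positivity) hanchor
    refine ⟨j, fun _ => ⟨hj1, hjN, ?_⟩⟩
    have hpt : a₀ + (j:ℤ)*(ε*(t:ℤ)) = a₀ + ε*((j*t:ℕ):ℤ) := by push_cast; ring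
    rw [hpt] at hjs
    have hjtD : ((j*t:ℕ):ℤ) ≤ D := by
      have h5 : j*t ≤ N*T := Nat.mul_le_mul hjN ht.2
      have h6 : ((j*t:ℕ):ℤ) ≤ ((N*T:ℕ):ℤ) := by exact_mod_cast h5
      have h7 : ((N*T:ℕ):ℤ) = (N:ℤ)*T := by push_cast; ring
      rw [h7] at h6
      exact le_trans h6 hNT
    have hmem := hcont ((j*t:ℕ):ℤ) (Int.natCast_nonneg _) hjtD
    exact hmemG _ hmem.1 hmem.2 hjs
  choose jf hjf using hwit
  classical
  set p : ℕ → ℤ := fun t => a₀ + ε*((jf t * t : ℕ):ℤ) with hp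
  set Img := (Finset.Icc 1 T).image p with hImg
  have hImgG : ↑Img ⊆ G := by
    intro x hx
    rw [hImg, Finset.coe_image, Set.mem_image] at hx
    obtain ⟨t, ht, hxt⟩ := hx
    rw [Finset.mem_coe] at ht
    rw [← hxt]
    exact ((hjf t) ht).2.2
  have hεne : ε ≠ 0 := by rcases hε with h | h <;> omega
  have hfib : ∀ y ∈ Img, ((Finset.Icc 1 T).filter (fun t => p t = y)).card ≤ N := by
    intro y _
    have hcard : ((Finset.Icc 1 T).filter (fun t => p t = y)).card ≤ (Finset.Icc 1 N).card := by
      apply Finset.card_le_card_of_injOn (fun t => jf t)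
      · intro t ht
        rw [Finset.mem_coe, Finset.mem_filter, Finset.mem_Icc] at ht
        rw [Finset.mem_coe, Finset.mem_Icc]
        have := hjf t (Finset.mem_Icc.mpr ht.1)
        exact ⟨this.1, this.2.1⟩
      · intro t ht t' ht' hjj
        simp only [Finset.coe_filter, Set.mem_setOf_eq, Finset.mem_Icc] at ht ht'
        have hpe : p t = p t' := by rw [ht.2, ht'.2]
        rw [hp] at hpe
        simp only at hpe
        have h1 : ((jf t * t : ℕ):ℤ) = ((jf t' * t' : ℕ):ℤ) := by
          rcases hε with h | h <;> (rw [h] at hpe; omega)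
        have h2 : jf t * t = jf t' * t' := by exact_mod_cast h1
        have hj1 := (hjf t (Finset.mem_Icc.mpr ht.1)).1
        have hjj' : jf t = jf t' := by simpa using hjj
        rw [hjj'] at h2
        exact Nat.eq_of_mul_eq_mul_left (by omega) h2
    rw [Nat.card_Icc] at hcard
    omega
  have hTle : T ≤ N * Img.card := by
    have h1 := Finset.card_eq_sum_card_image p (Finset.Icc 1 T)
    have h2 : ∑ y ∈ (Finset.Icc 1 T).image p, ((Finset.Icc 1 T).filter (fun t => p t = y)).card
        ≤ ((Finset.Icc 1 T).image p).card • N := by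
      apply Finset.sum_le_card_nsmul
      intro y hy
      exact hfib y (by rw [hImg]; exact hy)
    rw [Nat.card_Icc, Nat.add_sub_cancel] at h1
    rw [smul_eq_mul] at h2
    calc T = ∑ y ∈ (Finset.Icc 1 T).image p, ((Finset.Icc 1 T).filter (fun t => p t = y)).card := h1
      _ ≤ ((Finset.Icc 1 T).image p).card * N := h2
      _ = N * Img.card := by rw [hImg]; ring
  have hncI : Img.card ≤ G.ncard := by
    rw [← Set.ncard_coe_finset Img]
    exact Set.ncard_le_ncard hImgG hGfin
  set nc : ℝ := (G.ncard : ℝ) with hncdef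
  have hnc1 : (1:ℝ) ≤ nc := by
    have h0 : 0 < G.ncard := (Set.ncard_pos hGfin).mpr ⟨a₀, ha₀G⟩
    rw [hncdef]
    exact_mod_cast h0
  have hnc0 : (0:ℝ) ≤ nc := by linarith
  have hcount : (T:ℝ) ≤ N * nc := by
    have h4 : (T:ℝ) ≤ (N:ℝ) * Img.card := by exact_mod_cast hTle
    have h5 : (Img.card : ℝ) ≤ nc := by rw [hncdef]; exact_mod_cast hncI
    nlinarith
  show (q:ℝ)*L/(100*N)^2 ≤ nc
  rcases le_or_gt ((q:ℝ)*L) (10000*(N:ℝ)^2) with hsmall | hbig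
  · have hle1 : (q:ℝ)*L/(100*N)^2 ≤ 1 := by
      rw [div_le_one (by positivity)]
      calc (q:ℝ)*L ≤ 10000*(N:ℝ)^2 := hsmall
        _ = (100*N)^2 := by ring
    linarith
  · have hD2' : ((q:ℝ)*L - 2)/2 ≤ (D:ℝ) := by
      have h6 : ((B - A : ℤ):ℝ) ≤ ((2*D : ℤ):ℝ) := by exact_mod_cast hD2
      push_cast at h6
      linarith
    have k1 : (D:ℝ) - N < (N:ℝ)^2 * nc := by nlinarith [hcount, hNTD]
    have k5 : (1:ℝ) ≤ (N:ℝ)^2 := by nlinarith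
    have k3 : (N:ℝ)^2 ≤ (N:ℝ)^2 * nc := by nlinarith
    have k4 : (N:ℝ) ≤ (N:ℝ)^2 := by nlinarith
    rw [div_le_iff₀ (by positivity)]
    nlinarith [k1, hD2', k3, k4, k5]
end

section
/- Let r > 2 and let r′ be its Hölder conjugate, i.e. 1/r + 1/r′ = 1. Let E_r = ({x : |x − a/q| < q^{−r} for infinitely many irreducible fractions a/q} ∪ ℚ) ∩ [0,1]. If x ∈ [0,1] is irrational and x ∉ E_r, and {a_n/q_n}_{n=1}^∞ are the convergents of the continued fraction of x, then for all sufficiently large n, q_n^{−r} ≤ |x − a_n/q_n| < |x − a_{n−1}/q_{n−1}| < q_n^{−r′}. -/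
open scoped Real Topology BigOperators
open Filter
open GenContFract

section Aux
lemma myNotTerm (x : ℝ) (hirr : Irrational x) (n : ℕ) :
    ¬(GenContFract.of x).TerminatedAt n := by
  intro h
  obtain ⟨q, hq⟩ := (GenContFract.terminates_iff_rat x).1 ⟨n, h⟩
  exact hirr ⟨q, hq.symm⟩

lemma myDensPos (x : ℝ) (hirr : Irrational x) (n : ℕ) :
    0 < (GenContFract.of x).dens n := by
  have h := succ_nth_fib_le_of_nth_den (v := x) (n := n)
    (Or.inr (myNotTerm x hirr (n-1)))
  calc (0:ℝ) < (Nat.fib (n+1) : ℝ) := by exact_mod_cast Nat.fib_pos.2 n.succ_pos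
    _ ≤ _ := h

lemma myFibLe (x : ℝ) (hirr : Irrational x) (n : ℕ) :
    (Nat.fib (n+1) : ℝ) ≤ (GenContFract.of x).dens n :=
  succ_nth_fib_le_of_nth_den (Or.inr (myNotTerm x hirr (n-1)))

lemma myDensAdd (x : ℝ) (hirr : Irrational x) (n : ℕ) :
    (GenContFract.of x).dens n + (GenContFract.of x).dens (n+1) ≤
      (GenContFract.of x).dens (n+2) := by
  obtain ⟨gp, hgp⟩ := Option.ne_none_iff_exists'.1 (myNotTerm x hirr (n+1))
  have ha : gp.a = 1 := of_partNum_eq_one (partNum_eq_s_a hgp)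
  have hb : 1 ≤ gp.b := of_one_le_get?_partDen (partDen_eq_s_b hgp)
  rw [dens_recurrence hgp rfl rfl, ha, one_mul]
  have h1 := myDensPos x hirr (n+1)
  nlinarith

lemma myIntVal (x : ℝ) (hirr : Irrational x) :
    ∀ n : ℕ, ∃ a b : ℤ, (GenContFract.of x).nums n = (a : ℝ) ∧
      (GenContFract.of x).dens n = (b : ℝ) := by
  have hstep : ∀ n, ∃ z : ℤ, ∃ gp : Pair ℝ,
      (GenContFract.of x).s.get? n = some gp ∧ gp.a = 1 ∧ gp.b = (z : ℝ) := by
    intro n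
    obtain ⟨gp, hgp⟩ := Option.ne_none_iff_exists'.1 (myNotTerm x hirr n)
    obtain ⟨h1, z, hz⟩ := of_partNum_eq_one_and_exists_int_partDen_eq hgp
    exact ⟨z, gp, hgp, h1, hz⟩
  intro n
  induction n using Nat.strong_induction_on with
  | _ n ih =>
    match n with
    | 0 => exact ⟨⌊x⌋, 1, by simp [of_h_eq_floor], by simp⟩
    | 1 =>
      obtain ⟨z, gp, hgp, ha, hb⟩ := hstep 0
      refine ⟨z * ⌊x⌋ + 1, z, ?_, ?_⟩
      · rw [first_num_eq hgp, ha, hb, of_h_eq_floor]; push_cast; ring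
      · rw [first_den_eq hgp, hb]
    | n + 2 =>
      obtain ⟨a0, b0, ha0, hb0⟩ := ih n (by omega)
      obtain ⟨a1, b1, ha1, hb1⟩ := ih (n+1) (by omega)
      obtain ⟨z, gp, hgp, ha, hb⟩ := hstep (n+1)
      refine ⟨z * a1 + a0, z * b1 + b0, ?_, ?_⟩
      · rw [nums_recurrence hgp ha0 ha1, ha, hb]; push_cast; ring
      · rw [dens_recurrence hgp hb0 hb1, ha, hb]; push_cast; ring

lemma myStreamIrr (x : ℝ) (hirr : Irrational x) :
    ∀ n ifp, IntFractPair.stream x n = some ifp → Irrational ifp.fr := by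
  intro n
  induction n with
  | zero =>
    intro ifp h
    rw [IntFractPair.stream_zero] at h
    injection h with h
    rw [← h]
    exact hirr.sub_intCast _
  | succ n ih =>
    intro ifp h
    obtain ⟨ifp_n, hs, hne, heq⟩ := IntFractPair.succ_nth_stream_eq_some_iff.1 h
    rw [← heq]
    exact ((ih ifp_n hs).inv).sub_intCast _

lemma myStrict (x : ℝ) (hirr : Irrational x) (n : ℕ) :
    |x - (GenContFract.of x).convs n| <
      1 / ((GenContFract.of x).dens n * (GenContFract.of x).dens (n + 1)) := by
  set g := GenContFract.of x with hg
  have hterm : ¬g.TerminatedAt n := myNotTerm x hirr n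
  have hstream_succ : IntFractPair.stream x (n+1) ≠ none := fun h =>
    hterm (of_terminatedAt_n_iff_succ_nth_intFractPair_stream_eq_none.2 h)
  obtain ⟨ifp_succ, hsucc⟩ := Option.ne_none_iff_exists'.1 hstream_succ
  obtain ⟨ifp_n, hn, hfr_ne, hof⟩ := IntFractPair.succ_nth_stream_eq_some_iff.1 hsucc
  obtain ⟨gp, hgp⟩ := Option.ne_none_iff_exists'.1 hterm
  have hgpa : gp.a = 1 := of_partNum_eq_one (partNum_eq_s_a hgp)
  obtain ⟨ifp_succ', hsucc', hb⟩ :=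
    IntFractPair.exists_succ_get?_stream_of_gcf_of_get?_eq_some hgp
  have hifp : ifp_succ' = ifp_succ := by
    rw [hsucc] at hsucc'; injection hsucc' with h; exact h.symm
  have hbfloor : (gp.b : ℝ) = (⌊ifp_n.fr⁻¹⌋ : ℝ) := by
    rw [← hb, hifp, ← hof]
    rfl
  have hfr_irr : Irrational ifp_n.fr := myStreamIrr x hirr n ifp_n hn
  have hfr_pos : 0 < ifp_n.fr :=
    lt_of_le_of_ne (IntFractPair.nth_stream_fr_nonneg hn) (Ne.symm hfr_ne)
  have hinv_irr : Irrational ifp_n.fr⁻¹ := hfr_irr.inv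
  have hfloor_lt : (⌊ifp_n.fr⁻¹⌋ : ℝ) < ifp_n.fr⁻¹ :=
    lt_of_le_of_ne (Int.floor_le _)
      (fun h => hinv_irr ⟨(⌊ifp_n.fr⁻¹⌋ : ℚ), by push_cast; rw [h]⟩)
  set B := (g.contsAux (n+1)).b with hB
  set pB := (g.contsAux n).b with hpB
  have hdensn : g.dens n = B := by
    rw [den_eq_conts_b, nth_cont_eq_succ_nth_contAux]
  have hBpos : 0 < B := by rw [← hdensn]; exact myDensPos x hirr n
  have hpBnonneg : 0 ≤ pB := zero_le_of_contsAux_b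
  have hrec : g.contsAux (n+2) = ⟨gp.b * (g.contsAux (n+1)).a + gp.a * (g.contsAux n).a,
      gp.b * B + gp.a * pB⟩ := contsAux_recurrence hgp rfl rfl
  have hdenssucc : g.dens (n+1) = gp.b * B + pB := by
    rw [den_eq_conts_b, nth_cont_eq_succ_nth_contAux, hrec, hgpa]
    simp
  have hformula := sub_convs_eq hn
  simp only [hfr_ne, if_false] at hformula
  rw [← hg, ← hB, ← hpB] at hformula
  have hinv_pos : 0 < ifp_n.fr⁻¹ := inv_pos.2 hfr_pos
  have hpos2 : 0 < ifp_n.fr⁻¹ * B + pB := by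
    have := mul_pos hinv_pos hBpos; linarith
  have habs : |x - g.convs n| = 1 / (B * (ifp_n.fr⁻¹ * B + pB)) := by
    rw [hformula, abs_div, abs_pow, abs_neg, abs_one, one_pow]
    rw [abs_of_pos (mul_pos hBpos hpos2)]
  rw [habs, hdensn, hdenssucc]
  have hdsp : 0 < gp.b * B + pB := by
    rw [← hdenssucc]; exact myDensPos x hirr (n+1)
  apply div_lt_div_of_pos_left one_pos (mul_pos hBpos hdsp)
  have : gp.b * B + pB < ifp_n.fr⁻¹ * B + pB := by
    have : gp.b * B < ifp_n.fr⁻¹ * B := by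
      apply mul_lt_mul_of_pos_right _ hBpos
      rw [hbfloor]; exact hfloor_lt
    linarith
  exact mul_lt_mul_of_pos_left this hBpos
end Aux


/-- Lemma (continued-fraction approximation outside the Jarník set `E_r`):
if `r > 2`, `1/r + 1/r' = 1`, `x ∈ [0,1]` is irrational and only finitely many
irreducible fractions `a/q` satisfy `|x - a/q| < q^{-r}` (i.e. `x ∉ E_r`),
then for all large `n` the convergents `aₙ/qₙ` of `x` satisfy
`qₙ^{-r} ≤ |x - aₙ/qₙ| < |x - aₙ₋₁/qₙ₋₁| < qₙ^{-r'}`. -/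
theorem convergents_outside_Er
    (r r' : ℝ) (hr : 2 < r) (hconj : 1 / r + 1 / r' = 1)
    (x : ℝ) (hx : x ∈ Set.Icc (0 : ℝ) 1) (hirr : Irrational x)
    (hfin : {aq : ℤ × ℕ | 0 < aq.2 ∧ Int.gcd aq.1 aq.2 = 1 ∧
      |x - (aq.1 : ℝ) / aq.2| < (aq.2 : ℝ) ^ (-r)}.Finite) :
    ∀ᶠ n : ℕ in atTop,
      ((GenContFract.of x).dens (n + 1)) ^ (-r) ≤
          |x - (GenContFract.of x).nums (n + 1) /
            (GenContFract.of x).dens (n + 1)| ∧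
      |x - (GenContFract.of x).nums (n + 1) /
          (GenContFract.of x).dens (n + 1)| <
        |x - (GenContFract.of x).nums n / (GenContFract.of x).dens n| ∧
      |x - (GenContFract.of x).nums n / (GenContFract.of x).dens n| <
        ((GenContFract.of x).dens (n + 1)) ^ (-r') := by
  set g := GenContFract.of x with hg
  -- integer values
  obtain ⟨A, B, hAB⟩ : ∃ A B : ℕ → ℤ, ∀ n, g.nums n = (A n : ℝ) ∧ g.dens n = (B n : ℝ) := by
    choose A B hA hB using myIntVal x hirr
    exact ⟨A, B, fun n => ⟨hA n, hB n⟩⟩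
  have hA : ∀ n, g.nums n = (A n : ℝ) := fun n => (hAB n).1
  have hB : ∀ n, g.dens n = (B n : ℝ) := fun n => (hAB n).2
  have hdenpos : ∀ n, 0 < g.dens n := myDensPos x hirr
  have hBpos : ∀ n, 0 < B n := fun n => by
    have := hdenpos n; rw [hB n] at this; exact_mod_cast this
  have hden1 : ∀ n, 1 ≤ g.dens n := fun n => by
    have := hdenpos n; rw [hB n] at this ⊢
    exact_mod_cast hBpos n
  have hmono : ∀ n, g.dens n ≤ g.dens (n+1) := fun n => of_den_mono
  -- determinant and coprimality
  have hdet : ∀ n : ℕ, g.nums n * g.dens (n+1) - g.dens n * g.nums (n+1) = (-1)^(n+1) :=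
    fun n => SimpContFract.determinant (s := SimpContFract.of x) (myNotTerm x hirr n)
  have hdetZ : ∀ n : ℕ, A n * B (n+1) - B n * A (n+1) = (-1)^(n+1) := fun n => by
    have h := hdet n
    rw [hA, hA, hB, hB] at h
    exact_mod_cast h
  have hB0 : B 0 = 1 := by
    have : ((1:ℤ) : ℝ) = (B 0 : ℝ) := by rw [← hB 0]; simp
    exact_mod_cast this.symm
  have hcop : ∀ n : ℕ, Int.gcd (A n) (B n) = 1 := by
    intro n
    match n with
    | 0 => rw [hB0]; simp [Int.gcd]
    | n + 1 =>
      apply Int.isCoprime_iff_gcd_eq_one.mp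
      have h2 : ((-1:ℤ))^(n+1) * (-1)^(n+1) = 1 := by
        rcases neg_one_pow_eq_or ℤ (n+1) with h | h <;> rw [h] <;> ring
      exact ⟨-(-1)^(n+1) * B n, (-1)^(n+1) * A n,
        by linear_combination ((-1:ℤ)^(n+1)) * hdetZ n + h2⟩
  -- strict upper bound
  have hub : ∀ n, |x - g.nums n / g.dens n| < 1/(g.dens n * g.dens (n+1)) := fun n => by
    have h := myStrict x hirr n
    rwa [conv_eq_num_div_den] at h
  -- middle inequality, for every n
  have hmid : ∀ n, |x - g.nums (n+1)/g.dens (n+1)| < |x - g.nums n/g.dens n| := by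
    intro n
    have h1 := hub (n+1)
    have hee : n + 1 + 1 = n + 2 := rfl
    rw [hee] at h1
    have hnum : g.nums (n+1) * g.dens n - g.dens (n+1) * g.nums n = (-1)^n := by
      linear_combination -(hdet n)
    have hdiffeq : g.nums (n+1)/g.dens (n+1) - g.nums n/g.dens n
        = (-1)^n / (g.dens n * g.dens (n+1)) := by
      rw [div_sub_div _ _ (hdenpos (n+1)).ne' (hdenpos n).ne', hnum, mul_comm]
    have hdiffabs : |g.nums (n+1)/g.dens (n+1) - g.nums n/g.dens n|
        = 1/(g.dens n * g.dens (n+1)) := by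
      rw [hdiffeq, abs_div, abs_pow, abs_neg, abs_one, one_pow,
        abs_of_pos (mul_pos (hdenpos n) (hdenpos (n+1)))]
    have htri : 1/(g.dens n * g.dens (n+1)) ≤
        |x - g.nums n/g.dens n| + |x - g.nums (n+1)/g.dens (n+1)| := by
      rw [← hdiffabs]
      have he : g.nums (n+1)/g.dens (n+1) - g.nums n/g.dens n
          = (x - g.nums n/g.dens n) - (x - g.nums (n+1)/g.dens (n+1)) := by ring
      rw [he]
      exact abs_sub _ _
    have hq2 : 2 * g.dens n ≤ g.dens (n+2) := by
      have h3 := myDensAdd x hirr n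
      have h4 := hmono n
      linarith
    have h2 : 2 * (1/(g.dens (n+1) * g.dens (n+2))) ≤ 1/(g.dens n * g.dens (n+1)) := by
      rw [mul_one_div, div_le_div_iff₀ (mul_pos (hdenpos (n+1)) (hdenpos (n+2)))
        (mul_pos (hdenpos n) (hdenpos (n+1)))]
      have h5 := hdenpos (n+1)
      nlinarith
    linarith
  -- conjugate exponent facts
  have hrpos : (0:ℝ) < r := by linarith
  have hr'ne : 1/r' = 1 - 1/r := by linarith
  have hrinv : 0 < 1/r := by positivity
  have hrinvlt : 1/r < 1/2 := by
    rw [div_lt_div_iff₀ hrpos (by norm_num)]; linarith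
  have hr'invpos : 0 < 1/r' := by rw [hr'ne]; linarith
  have hr'pos : 0 < r' := by
    by_contra h
    push_neg at h
    have : 1/r' ≤ 0 := div_nonpos_of_nonneg_of_nonpos zero_le_one h
    linarith
  have hr'gt1 : 1 < r' := by
    have h6 : 1/r' < 1 := by rw [hr'ne]; linarith
    rw [div_lt_one hr'pos] at h6
    exact h6
  have hprod : (r-1)*(r'-1) = 1 := by
    have hrne : r ≠ 0 := hrpos.ne'
    have hr'ne0 : r' ≠ 0 := hr'pos.ne'
    field_simp at hconj
    nlinarith [hconj]
  -- finiteness: bound on denominators in the bad set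
  obtain ⟨M, hM⟩ := (hfin.image Prod.snd).bddAbove
  have claim : ∀ m : ℕ, M < (B m).toNat →
      (g.dens m) ^ (-r) ≤ |x - g.nums m / g.dens m| := by
    intro m hm
    by_contra hlt
    push_neg at hlt
    have hcast : (((B m).toNat : ℕ) : ℝ) = g.dens m := by
      rw [hB m]
      exact_mod_cast congrArg (Int.cast : ℤ → ℝ) (Int.toNat_of_nonneg (hBpos m).le)
    have hmem : ((A m, (B m).toNat) : ℤ × ℕ) ∈
        {aq : ℤ × ℕ | 0 < aq.2 ∧ Int.gcd aq.1 aq.2 = 1 ∧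
          |x - (aq.1 : ℝ) / aq.2| < (aq.2 : ℝ) ^ (-r)} := by
      refine ⟨?_, ?_, ?_⟩
      · show 0 < (B m).toNat
        have := hBpos m
        omega
      · show Int.gcd (A m) ((B m).toNat : ℤ) = 1
        rw [Int.toNat_of_nonneg (hBpos m).le]
        exact hcop m
      · show |x - (A m : ℝ) / (((B m).toNat : ℕ) : ℝ)| < (((B m).toNat : ℕ) : ℝ) ^ (-r)
        rw [hcast, ← hA m]
        exact hlt
    have : (B m).toNat ≤ M := hM (Set.mem_image_of_mem Prod.snd hmem)
    omega
  have hfibB : ∀ m, Nat.fib (m+1) ≤ (B m).toNat := by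
    intro m
    have h := myFibLe x hirr m
    rw [hB m] at h
    have h2 : (Nat.fib (m+1) : ℤ) ≤ B m := by exact_mod_cast h
    omega
  -- the eventual statement
  filter_upwards [eventually_ge_atTop (M + 4)] with n hn
  have hQn : M < (B n).toNat := by
    calc M < n + 1 := by omega
      _ ≤ Nat.fib (n+1) := Nat.le_fib_self (by omega)
      _ ≤ (B n).toNat := hfibB n
  have hQn1 : M < (B (n+1)).toNat := by
    calc M < n + 2 := by omega
      _ ≤ Nat.fib (n+2) := Nat.le_fib_self (by omega)
      _ ≤ (B (n+1)).toNat := hfibB (n+1)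
  refine ⟨claim (n+1) hQn1, hmid n, ?_⟩
  -- part 3
  have hc := claim n hQn
  have h2 := hub n
  have hq := hdenpos n
  have hq' := hdenpos (n+1)
  have step1 : g.dens n * g.dens (n+1) < g.dens n ^ r := by
    have h3 : g.dens n ^ (-r) < 1/(g.dens n * g.dens (n+1)) := lt_of_le_of_lt hc h2
    rw [Real.rpow_neg hq.le, one_div] at h3
    exact (inv_lt_inv₀ (Real.rpow_pos_of_pos hq r) (mul_pos hq hq')).mp h3
  have step2 : g.dens (n+1) < g.dens n ^ (r-1) := by
    have hqr : g.dens n ^ r = g.dens n ^ (r-1) * g.dens n := by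
      rw [show r = (r-1)+1 by ring, Real.rpow_add_one hq.ne']
      ring_nf
    rw [hqr] at step1
    have h4 : g.dens (n+1) * g.dens n < g.dens n ^ (r-1) * g.dens n := by
      linarith [step1]
    exact lt_of_mul_lt_mul_right h4 hq.le
  have step3 : g.dens (n+1) ^ r' < g.dens n * g.dens (n+1) := by
    have e1 : g.dens (n+1) ^ (r'-1) < (g.dens n ^ (r-1)) ^ (r'-1) :=
      Real.rpow_lt_rpow hq'.le step2 (by linarith)
    have e2 : (g.dens n ^ (r-1)) ^ (r'-1) = g.dens n := by
      rw [← Real.rpow_mul hq.le, hprod, Real.rpow_one]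
    rw [e2] at e1
    have e3 : g.dens (n+1) ^ r' = g.dens (n+1) ^ (r'-1) * g.dens (n+1) := by
      rw [show r' = (r'-1)+1 by ring, Real.rpow_add_one hq'.ne']
      ring_nf
    rw [e3]
    exact mul_lt_mul_of_pos_right e1 hq'
  calc |x - g.nums n / g.dens n| < 1/(g.dens n * g.dens (n+1)) := h2
    _ < 1/(g.dens (n+1) ^ r') :=
        div_lt_div_of_pos_left one_pos (Real.rpow_pos_of_pos hq' r') step3
    _ = g.dens (n+1) ^ (-r') := by rw [Real.rpow_neg hq'.le, one_div]
end
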